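/- For a prime p > 3, define def_(2) = I_{p,-6} + I_{p,(p+3)/2}, where I_{p,q} = Σ_{k=1}^{p-1} ((1+μ^k)(1+μ^{kq}))/((1−μ^k)(1−μ^{kq})) and μ = exp(2πi/p). Then def_(2) = −8r if p = 6r+1 and def_(2) = 8r+8 if p = 6r+5. -/

import Mathlib

open Finset

noncomputable def mu (p : ℕ) : ℂ := Complex.exp (2 * Real.pi * Complex.I / p)

noncomputable def Ipq (p : ℕ) (q : ℤ) : ℂ :=
  ∑ k ∈ Finset.Icc 1 (p - 1),
    ((1 + mu p ^ (k : ℤ)) * (1 + mu p ^ (q * k))) /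
      ((1 - mu p ^ (k : ℤ)) * (1 - mu p ^ (q * k)))

namespace Stmt16Arith

lemma imod {a j n : ℤ} (h1 : j * n ≤ a) (h2 : a < j * n + n) : a % n = a - j * n := by
  have h3 : a % n = (a - j * n) % n := by
    conv_lhs => rw [← sub_add_cancel a (j * n)]
    rw [Int.add_mul_emod_self_right]
  rw [h3]
  apply Int.emod_eq_of_lt
  · have h4 : j * n ≤ a := h1
    omega
  · have h4 : a < j * n + n := h2
    omega

lemma key0 (β γ : ℤ) (n : ℕ) :
    2 * ∑ b ∈ range n, (β * (b:ℤ) + γ) = β * ((n:ℤ) * ((n:ℤ) - 1)) + 2 * γ * (n:ℤ) := by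
  induction n with
  | zero => simp
  | succ n ih =>
    rw [sum_range_succ]
    push_cast
    linear_combination ih

lemma key (β γ : ℤ) (m n : ℕ) (h : m ≤ n) :
    2 * ∑ b ∈ Finset.Ico m n, (β * (b:ℤ) + γ)
      = β * ((n:ℤ) * ((n:ℤ) - 1) - (m:ℤ) * ((m:ℤ) - 1)) + 2 * γ * ((n:ℤ) - (m:ℤ)) := by
  rw [Finset.sum_Ico_eq_sub _ h]
  linear_combination key0 β γ n - key0 β γ m

lemma arith1 (s : ℕ) :
    4 * ((∑ b ∈ range (6*s+7), ((6*(b:ℤ)) % (6*(s:ℤ)+7)) * (b:ℤ)) +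
         ∑ b ∈ range (6*s+7), (((6*(s:ℤ)+4)*(b:ℤ)) % (6*(s:ℤ)+7)) * ((2*(b:ℤ)) % (6*(s:ℤ)+7)))
      = 2*(6*(s:ℤ)+7)^2*(6*(s:ℤ)+6) - 8*((s:ℤ)+1)*(6*(s:ℤ)+7) := by
  have hsplit : ∀ g : ℕ → ℤ, ∑ b ∈ range (6*s+7), g b =
      (∑ b ∈ Finset.Ico 0 (s+2), g b) + (∑ b ∈ Finset.Ico (s+2) (2*s+3), g b) + (∑ b ∈ Finset.Ico (2*s+3) (3*s+4), g b) + (∑ b ∈ Finset.Ico (3*s+4) (4*s+5), g b) + (∑ b ∈ Finset.Ico (4*s+5) (5*s+6), g b) + (∑ b ∈ Finset.Ico (5*s+6) (6*s+7), g b) := by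
    intro g
    rw [range_eq_Ico]
    rw [← Finset.sum_Ico_consecutive g (show 0 ≤ (s+2) by omega) (show (s+2) ≤ (6*s+7) by omega)]
    rw [← Finset.sum_Ico_consecutive g (show (s+2) ≤ (2*s+3) by omega) (show (2*s+3) ≤ (6*s+7) by omega)]
    rw [← Finset.sum_Ico_consecutive g (show (2*s+3) ≤ (3*s+4) by omega) (show (3*s+4) ≤ (6*s+7) by omega)]
    rw [← Finset.sum_Ico_consecutive g (show (3*s+4) ≤ (4*s+5) by omega) (show (4*s+5) ≤ (6*s+7) by omega)]
    rw [← Finset.sum_Ico_consecutive g (show (4*s+5) ≤ (5*s+6) by omega) (show (5*s+6) ≤ (6*s+7) by omega)]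
    ring
  rw [← Finset.sum_add_distrib, hsplit]
  have hc0 : ∀ b ∈ Finset.Ico 0 (s+2), ((6*(b:ℤ)) % (6*(s:ℤ)+7)) * (b:ℤ) + (((6*(s:ℤ)+4)*(b:ℤ)) % (6*(s:ℤ)+7)) * ((2*(b:ℤ)) % (6*(s:ℤ)+7)) = (2*(6*(s:ℤ)+7))*(b:ℤ) + (0:ℤ) := by
    intro b hb
    rw [Finset.mem_Ico] at hb
    by_cases hb0 : b = 0
    · subst hb0; norm_num
    · have hbl : (0:ℤ) ≤ (b:ℤ) := by positivity
      have hbu : (b:ℤ) < ((s:ℤ)+2) := by exact_mod_cast hb.2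
      have hbz : (1:ℤ) ≤ (b:ℤ) := by exact_mod_cast Nat.one_le_iff_ne_zero.mpr hb0
      rw [imod (show (0:ℤ)*(6*(s:ℤ)+7) ≤ 6*(b:ℤ) by nlinarith) (show 6*(b:ℤ) < (0:ℤ)*(6*(s:ℤ)+7) + (6*(s:ℤ)+7) by nlinarith)]
      rw [imod (show (0:ℤ)*(6*(s:ℤ)+7) ≤ 2*(b:ℤ) by nlinarith) (show 2*(b:ℤ) < (0:ℤ)*(6*(s:ℤ)+7) + (6*(s:ℤ)+7) by nlinarith)]
      rw [imod (show ((b:ℤ)-1)*(6*(s:ℤ)+7) ≤ (6*(s:ℤ)+4)*(b:ℤ) by nlinarith) (show (6*(s:ℤ)+4)*(b:ℤ) < ((b:ℤ)-1)*(6*(s:ℤ)+7) + (6*(s:ℤ)+7) by nlinarith)]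
      ring
  have hc1 : ∀ b ∈ Finset.Ico (s+2) (2*s+3), ((6*(b:ℤ)) % (6*(s:ℤ)+7)) * (b:ℤ) + (((6*(s:ℤ)+4)*(b:ℤ)) % (6*(s:ℤ)+7)) * ((2*(b:ℤ)) % (6*(s:ℤ)+7)) = (1*(6*(s:ℤ)+7))*(b:ℤ) + (0:ℤ) := by
    intro b hb
    rw [Finset.mem_Ico] at hb
    have hbl : ((s:ℤ)+2) ≤ (b:ℤ) := by exact_mod_cast hb.1
    have hbu : (b:ℤ) < (2*(s:ℤ)+3) := by exact_mod_cast hb.2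
    rw [imod (show (1:ℤ)*(6*(s:ℤ)+7) ≤ 6*(b:ℤ) by nlinarith) (show 6*(b:ℤ) < (1:ℤ)*(6*(s:ℤ)+7) + (6*(s:ℤ)+7) by nlinarith)]
    rw [imod (show (0:ℤ)*(6*(s:ℤ)+7) ≤ 2*(b:ℤ) by nlinarith) (show 2*(b:ℤ) < (0:ℤ)*(6*(s:ℤ)+7) + (6*(s:ℤ)+7) by nlinarith)]
    rw [imod (show ((b:ℤ)-1)*(6*(s:ℤ)+7) ≤ (6*(s:ℤ)+4)*(b:ℤ) by nlinarith) (show (6*(s:ℤ)+4)*(b:ℤ) < ((b:ℤ)-1)*(6*(s:ℤ)+7) + (6*(s:ℤ)+7) by nlinarith)]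
    ring
  have hc2 : ∀ b ∈ Finset.Ico (2*s+3) (3*s+4), ((6*(b:ℤ)) % (6*(s:ℤ)+7)) * (b:ℤ) + (((6*(s:ℤ)+4)*(b:ℤ)) % (6*(s:ℤ)+7)) * ((2*(b:ℤ)) % (6*(s:ℤ)+7)) = (2*(6*(s:ℤ)+7))*(b:ℤ) + (0:ℤ) := by
    intro b hb
    rw [Finset.mem_Ico] at hb
    have hbl : (2*(s:ℤ)+3) ≤ (b:ℤ) := by exact_mod_cast hb.1
    have hbu : (b:ℤ) < (3*(s:ℤ)+4) := by exact_mod_cast hb.2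
    rw [imod (show (2:ℤ)*(6*(s:ℤ)+7) ≤ 6*(b:ℤ) by nlinarith) (show 6*(b:ℤ) < (2:ℤ)*(6*(s:ℤ)+7) + (6*(s:ℤ)+7) by nlinarith)]
    rw [imod (show (0:ℤ)*(6*(s:ℤ)+7) ≤ 2*(b:ℤ) by nlinarith) (show 2*(b:ℤ) < (0:ℤ)*(6*(s:ℤ)+7) + (6*(s:ℤ)+7) by nlinarith)]
    rw [imod (show ((b:ℤ)-2)*(6*(s:ℤ)+7) ≤ (6*(s:ℤ)+4)*(b:ℤ) by nlinarith) (show (6*(s:ℤ)+4)*(b:ℤ) < ((b:ℤ)-2)*(6*(s:ℤ)+7) + (6*(s:ℤ)+7) by nlinarith)]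
    ring
  have hc3 : ∀ b ∈ Finset.Ico (3*s+4) (4*s+5), ((6*(b:ℤ)) % (6*(s:ℤ)+7)) * (b:ℤ) + (((6*(s:ℤ)+4)*(b:ℤ)) % (6*(s:ℤ)+7)) * ((2*(b:ℤ)) % (6*(s:ℤ)+7)) = (4*(6*(s:ℤ)+7))*(b:ℤ) + (-2*(6*(s:ℤ)+7)^2) := by
    intro b hb
    rw [Finset.mem_Ico] at hb
    have hbl : (3*(s:ℤ)+4) ≤ (b:ℤ) := by exact_mod_cast hb.1
    have hbu : (b:ℤ) < (4*(s:ℤ)+5) := by exact_mod_cast hb.2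
    rw [imod (show (3:ℤ)*(6*(s:ℤ)+7) ≤ 6*(b:ℤ) by nlinarith) (show 6*(b:ℤ) < (3:ℤ)*(6*(s:ℤ)+7) + (6*(s:ℤ)+7) by nlinarith)]
    rw [imod (show (1:ℤ)*(6*(s:ℤ)+7) ≤ 2*(b:ℤ) by nlinarith) (show 2*(b:ℤ) < (1:ℤ)*(6*(s:ℤ)+7) + (6*(s:ℤ)+7) by nlinarith)]
    rw [imod (show ((b:ℤ)-2)*(6*(s:ℤ)+7) ≤ (6*(s:ℤ)+4)*(b:ℤ) by nlinarith) (show (6*(s:ℤ)+4)*(b:ℤ) < ((b:ℤ)-2)*(6*(s:ℤ)+7) + (6*(s:ℤ)+7) by nlinarith)]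
    ring
  have hc4 : ∀ b ∈ Finset.Ico (4*s+5) (5*s+6), ((6*(b:ℤ)) % (6*(s:ℤ)+7)) * (b:ℤ) + (((6*(s:ℤ)+4)*(b:ℤ)) % (6*(s:ℤ)+7)) * ((2*(b:ℤ)) % (6*(s:ℤ)+7)) = (5*(6*(s:ℤ)+7))*(b:ℤ) + (-3*(6*(s:ℤ)+7)^2) := by
    intro b hb
    rw [Finset.mem_Ico] at hb
    have hbl : (4*(s:ℤ)+5) ≤ (b:ℤ) := by exact_mod_cast hb.1
    have hbu : (b:ℤ) < (5*(s:ℤ)+6) := by exact_mod_cast hb.2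
    rw [imod (show (4:ℤ)*(6*(s:ℤ)+7) ≤ 6*(b:ℤ) by nlinarith) (show 6*(b:ℤ) < (4:ℤ)*(6*(s:ℤ)+7) + (6*(s:ℤ)+7) by nlinarith)]
    rw [imod (show (1:ℤ)*(6*(s:ℤ)+7) ≤ 2*(b:ℤ) by nlinarith) (show 2*(b:ℤ) < (1:ℤ)*(6*(s:ℤ)+7) + (6*(s:ℤ)+7) by nlinarith)]
    rw [imod (show ((b:ℤ)-3)*(6*(s:ℤ)+7) ≤ (6*(s:ℤ)+4)*(b:ℤ) by nlinarith) (show (6*(s:ℤ)+4)*(b:ℤ) < ((b:ℤ)-3)*(6*(s:ℤ)+7) + (6*(s:ℤ)+7) by nlinarith)]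
    ring
  have hc5 : ∀ b ∈ Finset.Ico (5*s+6) (6*s+7), ((6*(b:ℤ)) % (6*(s:ℤ)+7)) * (b:ℤ) + (((6*(s:ℤ)+4)*(b:ℤ)) % (6*(s:ℤ)+7)) * ((2*(b:ℤ)) % (6*(s:ℤ)+7)) = (4*(6*(s:ℤ)+7))*(b:ℤ) + (-3*(6*(s:ℤ)+7)^2) := by
    intro b hb
    rw [Finset.mem_Ico] at hb
    have hbl : (5*(s:ℤ)+6) ≤ (b:ℤ) := by exact_mod_cast hb.1
    have hbu : (b:ℤ) < (6*(s:ℤ)+7) := by exact_mod_cast hb.2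
    rw [imod (show (5:ℤ)*(6*(s:ℤ)+7) ≤ 6*(b:ℤ) by nlinarith) (show 6*(b:ℤ) < (5:ℤ)*(6*(s:ℤ)+7) + (6*(s:ℤ)+7) by nlinarith)]
    rw [imod (show (1:ℤ)*(6*(s:ℤ)+7) ≤ 2*(b:ℤ) by nlinarith) (show 2*(b:ℤ) < (1:ℤ)*(6*(s:ℤ)+7) + (6*(s:ℤ)+7) by nlinarith)]
    rw [imod (show ((b:ℤ)-3)*(6*(s:ℤ)+7) ≤ (6*(s:ℤ)+4)*(b:ℤ) by nlinarith) (show (6*(s:ℤ)+4)*(b:ℤ) < ((b:ℤ)-3)*(6*(s:ℤ)+7) + (6*(s:ℤ)+7) by nlinarith)]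
    ring
  rw [Finset.sum_congr rfl hc0]
  rw [Finset.sum_congr rfl hc1]
  rw [Finset.sum_congr rfl hc2]
  rw [Finset.sum_congr rfl hc3]
  rw [Finset.sum_congr rfl hc4]
  rw [Finset.sum_congr rfl hc5]
  have hk0 := key (2*(6*(s:ℤ)+7)) (0:ℤ) 0 (s+2) (by omega)
  push_cast at hk0
  have hk1 := key (1*(6*(s:ℤ)+7)) (0:ℤ) (s+2) (2*s+3) (by omega)
  push_cast at hk1
  have hk2 := key (2*(6*(s:ℤ)+7)) (0:ℤ) (2*s+3) (3*s+4) (by omega)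
  push_cast at hk2
  have hk3 := key (4*(6*(s:ℤ)+7)) (-2*(6*(s:ℤ)+7)^2) (3*s+4) (4*s+5) (by omega)
  push_cast at hk3
  have hk4 := key (5*(6*(s:ℤ)+7)) (-3*(6*(s:ℤ)+7)^2) (4*s+5) (5*s+6) (by omega)
  push_cast at hk4
  have hk5 := key (4*(6*(s:ℤ)+7)) (-3*(6*(s:ℤ)+7)^2) (5*s+6) (6*s+7) (by omega)
  push_cast at hk5
  push_cast
  linear_combination 2*hk0 + 2*hk1 + 2*hk2 + 2*hk3 + 2*hk4 + 2*hk5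

lemma arith2 (r : ℕ) :
    4 * ((∑ b ∈ range (6*r+5), ((6*(b:ℤ)) % (6*(r:ℤ)+5)) * (b:ℤ)) +
         ∑ b ∈ range (6*r+5), (((6*(r:ℤ)+2)*(b:ℤ)) % (6*(r:ℤ)+5)) * ((2*(b:ℤ)) % (6*(r:ℤ)+5)))
      = 2*(6*(r:ℤ)+5)^2*(6*(r:ℤ)+4) + (8*(r:ℤ)+8)*(6*(r:ℤ)+5) := by
  have hsplit : ∀ g : ℕ → ℤ, ∑ b ∈ range (6*r+5), g b =
      (∑ b ∈ Finset.Ico 0 (r+1), g b) + (∑ b ∈ Finset.Ico (r+1) (2*r+2), g b) + (∑ b ∈ Finset.Ico (2*r+2) (3*r+3), g b) + (∑ b ∈ Finset.Ico (3*r+3) (4*r+4), g b) + (∑ b ∈ Finset.Ico (4*r+4) (5*r+5), g b) + (∑ b ∈ Finset.Ico (5*r+5) (6*r+5), g b) := by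
    intro g
    rw [range_eq_Ico]
    rw [← Finset.sum_Ico_consecutive g (show 0 ≤ (r+1) by omega) (show (r+1) ≤ (6*r+5) by omega)]
    rw [← Finset.sum_Ico_consecutive g (show (r+1) ≤ (2*r+2) by omega) (show (2*r+2) ≤ (6*r+5) by omega)]
    rw [← Finset.sum_Ico_consecutive g (show (2*r+2) ≤ (3*r+3) by omega) (show (3*r+3) ≤ (6*r+5) by omega)]
    rw [← Finset.sum_Ico_consecutive g (show (3*r+3) ≤ (4*r+4) by omega) (show (4*r+4) ≤ (6*r+5) by omega)]
    rw [← Finset.sum_Ico_consecutive g (show (4*r+4) ≤ (5*r+5) by omega) (show (5*r+5) ≤ (6*r+5) by omega)]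
    ring
  rw [← Finset.sum_add_distrib, hsplit]
  have hc0 : ∀ b ∈ Finset.Ico 0 (r+1), ((6*(b:ℤ)) % (6*(r:ℤ)+5)) * (b:ℤ) + (((6*(r:ℤ)+2)*(b:ℤ)) % (6*(r:ℤ)+5)) * ((2*(b:ℤ)) % (6*(r:ℤ)+5)) = (2*(6*(r:ℤ)+5))*(b:ℤ) + (0:ℤ) := by
    intro b hb
    rw [Finset.mem_Ico] at hb
    by_cases hb0 : b = 0
    · subst hb0; norm_num
    · have hbl : (0:ℤ) ≤ (b:ℤ) := by positivity
      have hbu : (b:ℤ) < ((r:ℤ)+1) := by exact_mod_cast hb.2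
      have hbz : (1:ℤ) ≤ (b:ℤ) := by exact_mod_cast Nat.one_le_iff_ne_zero.mpr hb0
      rw [imod (show (0:ℤ)*(6*(r:ℤ)+5) ≤ 6*(b:ℤ) by nlinarith) (show 6*(b:ℤ) < (0:ℤ)*(6*(r:ℤ)+5) + (6*(r:ℤ)+5) by nlinarith)]
      rw [imod (show (0:ℤ)*(6*(r:ℤ)+5) ≤ 2*(b:ℤ) by nlinarith) (show 2*(b:ℤ) < (0:ℤ)*(6*(r:ℤ)+5) + (6*(r:ℤ)+5) by nlinarith)]
      rw [imod (show ((b:ℤ)-1)*(6*(r:ℤ)+5) ≤ (6*(r:ℤ)+2)*(b:ℤ) by nlinarith) (show (6*(r:ℤ)+2)*(b:ℤ) < ((b:ℤ)-1)*(6*(r:ℤ)+5) + (6*(r:ℤ)+5) by nlinarith)]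
      ring
  have hc1 : ∀ b ∈ Finset.Ico (r+1) (2*r+2), ((6*(b:ℤ)) % (6*(r:ℤ)+5)) * (b:ℤ) + (((6*(r:ℤ)+2)*(b:ℤ)) % (6*(r:ℤ)+5)) * ((2*(b:ℤ)) % (6*(r:ℤ)+5)) = (1*(6*(r:ℤ)+5))*(b:ℤ) + (0:ℤ) := by
    intro b hb
    rw [Finset.mem_Ico] at hb
    have hbl : ((r:ℤ)+1) ≤ (b:ℤ) := by exact_mod_cast hb.1
    have hbu : (b:ℤ) < (2*(r:ℤ)+2) := by exact_mod_cast hb.2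
    rw [imod (show (1:ℤ)*(6*(r:ℤ)+5) ≤ 6*(b:ℤ) by nlinarith) (show 6*(b:ℤ) < (1:ℤ)*(6*(r:ℤ)+5) + (6*(r:ℤ)+5) by nlinarith)]
    rw [imod (show (0:ℤ)*(6*(r:ℤ)+5) ≤ 2*(b:ℤ) by nlinarith) (show 2*(b:ℤ) < (0:ℤ)*(6*(r:ℤ)+5) + (6*(r:ℤ)+5) by nlinarith)]
    rw [imod (show ((b:ℤ)-1)*(6*(r:ℤ)+5) ≤ (6*(r:ℤ)+2)*(b:ℤ) by nlinarith) (show (6*(r:ℤ)+2)*(b:ℤ) < ((b:ℤ)-1)*(6*(r:ℤ)+5) + (6*(r:ℤ)+5) by nlinarith)]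
    ring
  have hc2 : ∀ b ∈ Finset.Ico (2*r+2) (3*r+3), ((6*(b:ℤ)) % (6*(r:ℤ)+5)) * (b:ℤ) + (((6*(r:ℤ)+2)*(b:ℤ)) % (6*(r:ℤ)+5)) * ((2*(b:ℤ)) % (6*(r:ℤ)+5)) = (2*(6*(r:ℤ)+5))*(b:ℤ) + (0:ℤ) := by
    intro b hb
    rw [Finset.mem_Ico] at hb
    have hbl : (2*(r:ℤ)+2) ≤ (b:ℤ) := by exact_mod_cast hb.1
    have hbu : (b:ℤ) < (3*(r:ℤ)+3) := by exact_mod_cast hb.2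
    rw [imod (show (2:ℤ)*(6*(r:ℤ)+5) ≤ 6*(b:ℤ) by nlinarith) (show 6*(b:ℤ) < (2:ℤ)*(6*(r:ℤ)+5) + (6*(r:ℤ)+5) by nlinarith)]
    rw [imod (show (0:ℤ)*(6*(r:ℤ)+5) ≤ 2*(b:ℤ) by nlinarith) (show 2*(b:ℤ) < (0:ℤ)*(6*(r:ℤ)+5) + (6*(r:ℤ)+5) by nlinarith)]
    rw [imod (show ((b:ℤ)-2)*(6*(r:ℤ)+5) ≤ (6*(r:ℤ)+2)*(b:ℤ) by nlinarith) (show (6*(r:ℤ)+2)*(b:ℤ) < ((b:ℤ)-2)*(6*(r:ℤ)+5) + (6*(r:ℤ)+5) by nlinarith)]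
    ring
  have hc3 : ∀ b ∈ Finset.Ico (3*r+3) (4*r+4), ((6*(b:ℤ)) % (6*(r:ℤ)+5)) * (b:ℤ) + (((6*(r:ℤ)+2)*(b:ℤ)) % (6*(r:ℤ)+5)) * ((2*(b:ℤ)) % (6*(r:ℤ)+5)) = (4*(6*(r:ℤ)+5))*(b:ℤ) + (-2*(6*(r:ℤ)+5)^2) := by
    intro b hb
    rw [Finset.mem_Ico] at hb
    have hbl : (3*(r:ℤ)+3) ≤ (b:ℤ) := by exact_mod_cast hb.1
    have hbu : (b:ℤ) < (4*(r:ℤ)+4) := by exact_mod_cast hb.2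
    rw [imod (show (3:ℤ)*(6*(r:ℤ)+5) ≤ 6*(b:ℤ) by nlinarith) (show 6*(b:ℤ) < (3:ℤ)*(6*(r:ℤ)+5) + (6*(r:ℤ)+5) by nlinarith)]
    rw [imod (show (1:ℤ)*(6*(r:ℤ)+5) ≤ 2*(b:ℤ) by nlinarith) (show 2*(b:ℤ) < (1:ℤ)*(6*(r:ℤ)+5) + (6*(r:ℤ)+5) by nlinarith)]
    rw [imod (show ((b:ℤ)-2)*(6*(r:ℤ)+5) ≤ (6*(r:ℤ)+2)*(b:ℤ) by nlinarith) (show (6*(r:ℤ)+2)*(b:ℤ) < ((b:ℤ)-2)*(6*(r:ℤ)+5) + (6*(r:ℤ)+5) by nlinarith)]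
    ring
  have hc4 : ∀ b ∈ Finset.Ico (4*r+4) (5*r+5), ((6*(b:ℤ)) % (6*(r:ℤ)+5)) * (b:ℤ) + (((6*(r:ℤ)+2)*(b:ℤ)) % (6*(r:ℤ)+5)) * ((2*(b:ℤ)) % (6*(r:ℤ)+5)) = (5*(6*(r:ℤ)+5))*(b:ℤ) + (-3*(6*(r:ℤ)+5)^2) := by
    intro b hb
    rw [Finset.mem_Ico] at hb
    have hbl : (4*(r:ℤ)+4) ≤ (b:ℤ) := by exact_mod_cast hb.1
    have hbu : (b:ℤ) < (5*(r:ℤ)+5) := by exact_mod_cast hb.2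
    rw [imod (show (4:ℤ)*(6*(r:ℤ)+5) ≤ 6*(b:ℤ) by nlinarith) (show 6*(b:ℤ) < (4:ℤ)*(6*(r:ℤ)+5) + (6*(r:ℤ)+5) by nlinarith)]
    rw [imod (show (1:ℤ)*(6*(r:ℤ)+5) ≤ 2*(b:ℤ) by nlinarith) (show 2*(b:ℤ) < (1:ℤ)*(6*(r:ℤ)+5) + (6*(r:ℤ)+5) by nlinarith)]
    rw [imod (show ((b:ℤ)-3)*(6*(r:ℤ)+5) ≤ (6*(r:ℤ)+2)*(b:ℤ) by nlinarith) (show (6*(r:ℤ)+2)*(b:ℤ) < ((b:ℤ)-3)*(6*(r:ℤ)+5) + (6*(r:ℤ)+5) by nlinarith)]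
    ring
  have hc5 : ∀ b ∈ Finset.Ico (5*r+5) (6*r+5), ((6*(b:ℤ)) % (6*(r:ℤ)+5)) * (b:ℤ) + (((6*(r:ℤ)+2)*(b:ℤ)) % (6*(r:ℤ)+5)) * ((2*(b:ℤ)) % (6*(r:ℤ)+5)) = (4*(6*(r:ℤ)+5))*(b:ℤ) + (-3*(6*(r:ℤ)+5)^2) := by
    intro b hb
    rw [Finset.mem_Ico] at hb
    have hbl : (5*(r:ℤ)+5) ≤ (b:ℤ) := by exact_mod_cast hb.1
    have hbu : (b:ℤ) < (6*(r:ℤ)+5) := by exact_mod_cast hb.2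
    rw [imod (show (5:ℤ)*(6*(r:ℤ)+5) ≤ 6*(b:ℤ) by nlinarith) (show 6*(b:ℤ) < (5:ℤ)*(6*(r:ℤ)+5) + (6*(r:ℤ)+5) by nlinarith)]
    rw [imod (show (1:ℤ)*(6*(r:ℤ)+5) ≤ 2*(b:ℤ) by nlinarith) (show 2*(b:ℤ) < (1:ℤ)*(6*(r:ℤ)+5) + (6*(r:ℤ)+5) by nlinarith)]
    rw [imod (show ((b:ℤ)-3)*(6*(r:ℤ)+5) ≤ (6*(r:ℤ)+2)*(b:ℤ) by nlinarith) (show (6*(r:ℤ)+2)*(b:ℤ) < ((b:ℤ)-3)*(6*(r:ℤ)+5) + (6*(r:ℤ)+5) by nlinarith)]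
    ring
  rw [Finset.sum_congr rfl hc0]
  rw [Finset.sum_congr rfl hc1]
  rw [Finset.sum_congr rfl hc2]
  rw [Finset.sum_congr rfl hc3]
  rw [Finset.sum_congr rfl hc4]
  rw [Finset.sum_congr rfl hc5]
  have hk0 := key (2*(6*(r:ℤ)+5)) (0:ℤ) 0 (r+1) (by omega)
  push_cast at hk0
  have hk1 := key (1*(6*(r:ℤ)+5)) (0:ℤ) (r+1) (2*r+2) (by omega)
  push_cast at hk1
  have hk2 := key (2*(6*(r:ℤ)+5)) (0:ℤ) (2*r+2) (3*r+3) (by omega)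
  push_cast at hk2
  have hk3 := key (4*(6*(r:ℤ)+5)) (-2*(6*(r:ℤ)+5)^2) (3*r+3) (4*r+4) (by omega)
  push_cast at hk3
  have hk4 := key (5*(6*(r:ℤ)+5)) (-3*(6*(r:ℤ)+5)^2) (4*r+4) (5*r+5) (by omega)
  push_cast at hk4
  have hk5 := key (4*(6*(r:ℤ)+5)) (-3*(6*(r:ℤ)+5)^2) (5*r+5) (6*r+5) (by omega)
  push_cast at hk5
  push_cast
  linear_combination 2*hk0 + 2*hk1 + 2*hk2 + 2*hk3 + 2*hk4 + 2*hk5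

end Stmt16Arith

namespace Stmt16Aux

noncomputable def ee (p : ℕ) [NeZero p] (x : ZMod p) : ℂ := mu p ^ x.val

def W (p : ℕ) [NeZero p] (a : ZMod p) : ℕ := ∑ x : ZMod p, (a * x).val * x.val

variable {p : ℕ} [NeZero p]

lemma hzeta (p : ℕ) [NeZero p] : IsPrimitiveRoot (mu p) p := by
  simpa [mu] using Complex.isPrimitiveRoot_exp p (NeZero.ne p)

lemma valcast (x : ZMod p) : ((x.val : ℕ) : ZMod p) = x := by
  simp [ZMod.natCast_val, ZMod.cast_id]

lemma ee_nat (m : ℕ) : mu p ^ m = ee p ((m : ZMod p)) := by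
  unfold ee
  rw [ZMod.val_natCast]
  conv_lhs => rw [← Nat.mod_add_div m p]
  rw [pow_add, pow_mul, (hzeta p).pow_eq_one, one_pow, mul_one]

lemma ee_int (m : ℤ) : mu p ^ m = ee p ((m : ZMod p)) := by
  have h0 : ((m - ((m : ZMod p)).val : ℤ) : ZMod p) = 0 := by
    push_cast [ZMod.natCast_val, ZMod.cast_id]
    ring
  have hdvd : ((p : ℤ)) ∣ (m - ((m : ZMod p)).val) :=
    (ZMod.intCast_zmod_eq_zero_iff_dvd _ p).mp h0
  have h1 : mu p ^ ((m - ((m : ZMod p)).val : ℤ)) = 1 :=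
    ((hzeta p).zpow_eq_one_iff_dvd _).mpr hdvd
  have hne : mu p ≠ 0 := by simp [mu, Complex.exp_ne_zero]
  have h2 : mu p ^ m = mu p ^ ((m - ((m : ZMod p)).val : ℤ)) * mu p ^ ((((m : ZMod p)).val : ℤ)) := by
    rw [← zpow_add₀ hne]
    congr 1
    ring
  rw [h2, h1, one_mul, zpow_natCast, ee_nat, valcast]

lemma ee_add (x y : ZMod p) : ee p (x + y) = ee p x * ee p y := by
  have h : ((x.val + y.val : ℕ) : ZMod p) = x + y := by push_cast [valcast]; rfl
  rw [← h, ← ee_nat, pow_add]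
  rfl

lemma ee_pow_nat (a : ℕ) (x : ZMod p) : ee p ((a : ZMod p) * x) = (ee p x) ^ a := by
  have h : ((x.val * a : ℕ) : ZMod p) = (a : ZMod p) * x := by push_cast [valcast]; ring
  rw [← h, ← ee_nat, pow_mul]
  rfl

lemma ee_zero : ee p (0 : ZMod p) = 1 := by simp [ee]

lemma ee_ne_one (hp1 : 1 < p) {x : ZMod p} (hx : x ≠ 0) : ee p x ≠ 1 := by
  intro h
  have hd : p ∣ x.val := (hzeta p).dvd_of_pow_eq_one x.val h
  exact hx ((ZMod.val_eq_zero x).mp (Nat.eq_zero_of_dvd_of_lt hd (ZMod.val_lt x)))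



lemma sum_val {M : Type*} [AddCommMonoid M] (f : ℕ → M) :
    ∑ x : ZMod p, f x.val = ∑ a ∈ range p, f a := by
  apply Finset.sum_nbij' (fun x : ZMod p => x.val) (fun a : ℕ => (a : ZMod p))
  · intro a _; exact mem_range.mpr (ZMod.val_lt a)
  · intro a _; exact mem_univ _
  · intro a _; exact valcast a
  · intro a ha; exact ZMod.val_cast_of_lt (mem_range.mp ha)
  · intro a _; rfl

lemma sum_ee_univ [Fact p.Prime] (hp1 : 1 < p) {c : ZMod p} (hc : c ≠ 0) :
    ∑ x : ZMod p, ee p (c * x) = 0 := by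
  have h1 : ∑ x : ZMod p, ee p (c * x) = ∑ x : ZMod p, ee p x := by
    apply Equiv.sum_comp (Equiv.mulLeft₀ c hc) (ee p)
  rw [h1]
  have h2 : ∑ x : ZMod p, ee p x = ∑ a ∈ range p, mu p ^ a := sum_val _
  rw [h2]
  exact (hzeta p).geom_sum_eq_zero hp1

lemma sum_ee_erase [Fact p.Prime] (hp1 : 1 < p) (c : ZMod p) :
    ∑ x ∈ Finset.univ.erase (0 : ZMod p), ee p (c * x) =
      if c = 0 then (p : ℂ) - 1 else -1 := by
  have hs := Finset.add_sum_erase Finset.univ (fun x => ee p (c * x)) (mem_univ (0 : ZMod p))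
  try dsimp only at hs
  have h0 : ee p (c * 0) = 1 := by rw [mul_zero, ee_zero]
  split_ifs with hc
  · subst hc
    have : ∀ x ∈ Finset.univ.erase (0 : ZMod p), ee p (0 * x) = 1 := by
      intro x _; rw [zero_mul, ee_zero]
    rw [Finset.sum_congr rfl this, Finset.sum_const, Finset.card_erase_of_mem (mem_univ _)]
    simp [ZMod.card]
    rw [Nat.cast_sub (by omega : 1 ≤ p)]
    simp
  · have hu := sum_ee_univ hp1 hc
    rw [hu, h0] at hs
    linear_combination hs


lemma tele (z : ℂ) (n : ℕ) :
    (z - 1) * ∑ a ∈ range n, (a : ℂ) * z ^ a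
      = ((n : ℂ) - 1) * z ^ n - (∑ a ∈ range n, z ^ a) + 1 := by
  induction n with
  | zero => simp
  | succ n ih =>
    rw [sum_range_succ, sum_range_succ]
    push_cast
    linear_combination ih

noncomputable def D (p : ℕ) [NeZero p] (x : ZMod p) : ℂ :=
  ∑ a ∈ range p, (a : ℂ) * ee p ((a : ZMod p) * x)

lemma D_spec (hp1 : 1 < p) {x : ZMod p} (hx : x ≠ 0) :
    (1 - ee p x) * D p x = -(p : ℂ) := by
  have hne : ee p x ≠ 1 := ee_ne_one hp1 hx
  have hz : (ee p x) ^ p = 1 := by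
    rw [← ee_pow_nat, ZMod.natCast_self, zero_mul, ee_zero]
  have hgeom : ∑ a ∈ range p, (ee p x) ^ a = 0 := by
    rw [geom_sum_eq hne, hz]
    simp
  have htel := tele (ee p x) p
  rw [hz, hgeom] at htel
  have hre : D p x = ∑ a ∈ range p, (a : ℂ) * (ee p x) ^ a := by
    refine Finset.sum_congr rfl fun a _ => by rw [ee_pow_nat]
  rw [hre]
  linear_combination -htel

lemma gauss (hp1 : 1 ≤ p) : 2 * ∑ a ∈ range p, (a : ℂ) = (p : ℂ) * ((p : ℂ) - 1) := by
  have h := Finset.sum_range_id_mul_two p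
  have h2 := congrArg (Nat.cast : ℕ → ℂ) h
  push_cast [Nat.cast_sub hp1] at h2
  linear_combination h2

lemma pick (t : ZMod p) :
    ∑ a ∈ range p, (a : ℂ) * (if ((a : ZMod p) = t) then 1 else 0) = (t.val : ℂ) := by
  rw [Finset.sum_eq_single t.val]
  · rw [if_pos (valcast t)]
    ring
  · intro a ha hne
    rw [if_neg, mul_zero]
    intro h
    exact hne (by rw [← ZMod.val_cast_of_lt (mem_range.mp ha), h])
  · intro h
    exact absurd (mem_range.mpr (ZMod.val_lt t)) h


lemma sum_cast_val (q' : ZMod p) : (W p (-q') : ℂ) = ∑ b ∈ range p, ((-q' * (b : ZMod p)).val : ℂ) * (b : ℂ) := by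
  rw [← sum_val (fun n : ℕ => ((-q' * ((n : ℕ) : ZMod p)).val : ℂ) * ((n : ℕ) : ℂ))]
  unfold W
  push_cast
  refine Finset.sum_congr rfl fun x _ => ?_
  rw [valcast]

lemma main [Fact p.Prime] (hp3 : 3 < p) (q : ℤ) (hq : ((q : ZMod p)) ≠ 0) :
    (p : ℂ) * Ipq p q = 4 * (W p (-(q : ZMod p)) : ℂ) - (p : ℂ) ^ 2 * ((p : ℂ) - 1) := by
  have hp1 : 1 < p := by omega
  have hpC : (p : ℂ) ≠ 0 := Nat.cast_ne_zero.mpr (by omega)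
  set q' : ZMod p := (q : ZMod p) with hq'def
  set E : Finset (ZMod p) := Finset.univ.erase 0 with hE
  have hsumA : ∑ a ∈ range p, (a : ℂ) = (p : ℂ) * ((p : ℂ) - 1) / 2 := by
    have hg := gauss (p := p) (by omega)
    field_simp
    linear_combination hg
  -- step 1 : reindex
  have hstep1 : Ipq p q = ∑ x ∈ E, (1 + ee p x) * (1 + ee p (q' * x)) /
      ((1 - ee p x) * (1 - ee p (q' * x))) := by
    unfold Ipq
    apply Finset.sum_nbij' (fun k : ℕ => (k : ZMod p)) (fun x : ZMod p => x.val)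
    · intro k hk
      rw [Finset.mem_Icc] at hk
      refine Finset.mem_erase.mpr ⟨?_, mem_univ _⟩
      intro h
      have h1 := (ZMod.natCast_eq_zero_iff k p).mp h
      have h2 := Nat.le_of_dvd (by omega) h1
      omega
    · intro x hx
      rw [hE, Finset.mem_erase] at hx
      rw [Finset.mem_Icc]
      have h1 : x.val ≠ 0 := fun h => hx.1 ((ZMod.val_eq_zero x).mp h)
      have h2 := ZMod.val_lt x
      omega
    · intro k hk
      rw [Finset.mem_Icc] at hk
      exact ZMod.val_cast_of_lt (by omega)
    · intro x _
      exact valcast x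
    · intro k _
      have e1 : mu p ^ (k : ℤ) = ee p ((k : ℕ) : ZMod p) := by
        rw [zpow_natCast, ee_nat]
      have e2 : mu p ^ (q * k) = ee p (q' * ((k : ℕ) : ZMod p)) := by
        rw [ee_int (q * k)]
        congr 1
        push_cast
        ring
      rw [e1, e2]
  -- pointwise identity multiplied by p^2
  have hpoint : ∀ x ∈ E, (p : ℂ) ^ 2 * ((1 + ee p x) * (1 + ee p (q' * x)) /
      ((1 - ee p x) * (1 - ee p (q' * x))))
      = (p : ℂ) ^ 2 + 2 * (p : ℂ) * D p x + 2 * (p : ℂ) * D p (q' * x)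
        + 4 * (D p x * D p (q' * x)) := by
    intro x hx
    rw [hE, Finset.mem_erase] at hx
    have hx0 : x ≠ 0 := hx.1
    have hqx0 : q' * x ≠ 0 := mul_ne_zero hq hx0
    have hX := D_spec hp1 hx0
    have hY := D_spec hp1 hqx0
    have hX1 : (1 : ℂ) - ee p x ≠ 0 := fun h => ee_ne_one hp1 hx0 (by linear_combination -h)
    have hY1 : (1 : ℂ) - ee p (q' * x) ≠ 0 := fun h => ee_ne_one hp1 hqx0 (by linear_combination -h)
    have hDx : D p x = -(p : ℂ) / (1 - ee p x) := by
      rw [eq_div_iff hX1]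
      linear_combination hX
    have hDy : D p (q' * x) = -(p : ℂ) / (1 - ee p (q' * x)) := by
      rw [eq_div_iff hY1]
      linear_combination hY
    rw [hDx, hDy]
    field_simp
    ring
  -- sum of D over E
  have hDsum : ∑ x ∈ E, D p x = -((p : ℂ) * ((p : ℂ) - 1) / 2) := by
    unfold D
    rw [Finset.sum_comm]
    have h1 : ∀ a ∈ range p, ∑ x ∈ E, (a : ℂ) * ee p ((a : ZMod p) * x) = -(a : ℂ) := by
      intro a ha
      rw [← Finset.mul_sum, hE, sum_ee_erase hp1]
      by_cases h : a = 0
      · subst h; simp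
      · rw [if_neg, mul_neg_one]
        intro hcast
        have h1 := (ZMod.natCast_eq_zero_iff a p).mp hcast
        have h2 := Nat.le_of_dvd (by omega) h1
        rw [mem_range] at ha
        omega
    rw [Finset.sum_congr rfl h1, Finset.sum_neg_distrib, hsumA]
  -- reindex for q'
  have hre : ∑ x ∈ E, D p (q' * x) = ∑ x ∈ E, D p x := by
    apply Finset.sum_nbij' (fun x : ZMod p => q' * x) (fun x : ZMod p => q'⁻¹ * x)
    · intro a ha
      rw [hE, Finset.mem_erase] at ha ⊢
      exact ⟨mul_ne_zero hq ha.1, mem_univ _⟩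
    · intro a ha
      rw [hE, Finset.mem_erase] at ha ⊢
      exact ⟨mul_ne_zero (inv_ne_zero hq) ha.1, mem_univ _⟩
    · intro a _
      rw [← mul_assoc, inv_mul_cancel₀ hq, one_mul]
    · intro a _
      rw [← mul_assoc, mul_inv_cancel₀ hq, one_mul]
    · intro a _
      rfl
  -- the double sum
  have hDD : ∑ x ∈ E, D p x * D p (q' * x)
      = (p : ℂ) * (W p (-q') : ℂ) - ((p : ℂ) * ((p : ℂ) - 1) / 2) ^ 2 := by
    have hpt : ∀ x ∈ E, D p x * D p (q' * x)
        = ∑ a ∈ range p, ∑ b ∈ range p,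
            ((a : ℂ) * (b : ℂ)) * ee p (((a : ZMod p) + (b : ZMod p) * q') * x) := by
      intro x _
      unfold D
      rw [Finset.sum_mul_sum]
      refine Finset.sum_congr rfl fun a _ => Finset.sum_congr rfl fun b _ => ?_
      have h : ee p ((a : ZMod p) * x) * ee p ((b : ZMod p) * (q' * x))
          = ee p (((a : ZMod p) + (b : ZMod p) * q') * x) := by
        rw [← ee_add]
        congr 1
        ring
      calc (a : ℂ) * ee p ((a : ZMod p) * x) * ((b : ℂ) * ee p ((b : ZMod p) * (q' * x)))
          = ((a : ℂ) * (b : ℂ)) * (ee p ((a : ZMod p) * x) * ee p ((b : ZMod p) * (q' * x))) := by ring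
        _ = ((a : ℂ) * (b : ℂ)) * ee p (((a : ZMod p) + (b : ZMod p) * q') * x) := by rw [h]
    rw [Finset.sum_congr rfl hpt, Finset.sum_comm]
    have h2 : ∀ a ∈ range p, ∑ x ∈ E, ∑ b ∈ range p,
        ((a : ℂ) * (b : ℂ)) * ee p (((a : ZMod p) + (b : ZMod p) * q') * x)
        = ∑ b ∈ range p, (((p : ℂ) * (((a : ℂ) * (b : ℂ)) *
            (if ((a : ZMod p)) = -q' * (b : ZMod p) then 1 else 0))) - (a : ℂ) * (b : ℂ)) := by
      intro a _
      rw [Finset.sum_comm]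
      refine Finset.sum_congr rfl fun b _ => ?_
      rw [← Finset.mul_sum, hE, sum_ee_erase hp1]
      have hiff : ((a : ZMod p) + (b : ZMod p) * q' = 0) ↔ ((a : ZMod p) = -q' * (b : ZMod p)) := by
        constructor <;> intro h <;> linear_combination h
      rw [if_congr hiff rfl rfl]
      split_ifs <;> ring
    rw [Finset.sum_congr rfl h2]
    have h3 : ∀ a ∈ range p, ∑ b ∈ range p, (((p : ℂ) * (((a : ℂ) * (b : ℂ)) *
            (if ((a : ZMod p)) = -q' * (b : ZMod p) then 1 else 0))) - (a : ℂ) * (b : ℂ))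
        = (∑ b ∈ range p, ((p : ℂ) * (((a : ℂ) * (b : ℂ)) *
            (if ((a : ZMod p)) = -q' * (b : ZMod p) then 1 else 0))))
          - (a : ℂ) * ((p : ℂ) * ((p : ℂ) - 1) / 2) := by
      intro a _
      rw [Finset.sum_sub_distrib]
      congr 1
      rw [← Finset.mul_sum, hsumA]
    rw [Finset.sum_congr rfl h3, Finset.sum_sub_distrib, Finset.sum_comm]
    have h4 : ∀ b ∈ range p, ∑ a ∈ range p, ((p : ℂ) * (((a : ℂ) * (b : ℂ)) *
            (if ((a : ZMod p)) = -q' * (b : ZMod p) then 1 else 0)))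
        = (p : ℂ) * (b : ℂ) * (((-q' * (b : ZMod p)).val : ℕ) : ℂ) := by
      intro b _
      have : ∀ a ∈ range p, ((p : ℂ) * (((a : ℂ) * (b : ℂ)) *
            (if ((a : ZMod p)) = -q' * (b : ZMod p) then 1 else 0)))
          = ((p : ℂ) * (b : ℂ)) * ((a : ℂ) * (if ((a : ZMod p)) = -q' * (b : ZMod p) then 1 else 0)) := by
        intro a _
        ring
      rw [Finset.sum_congr rfl this, ← Finset.mul_sum, pick (-q' * (b : ZMod p))]
    rw [Finset.sum_congr rfl h4]
    have h5 : ∑ b ∈ range p, (p : ℂ) * (b : ℂ) * (((-q' * (b : ZMod p)).val : ℕ) : ℂ)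
        = (p : ℂ) * (W p (-q') : ℂ) := by
      rw [sum_cast_val, Finset.mul_sum]
      refine Finset.sum_congr rfl fun b _ => by ring
    rw [h5]
    have h6 : ∑ b ∈ range p, (b : ℂ) * ((p : ℂ) * ((p : ℂ) - 1) / 2)
        = ((p : ℂ) * ((p : ℂ) - 1) / 2) ^ 2 := by
      rw [← Finset.sum_mul, hsumA]
      ring
    rw [h6]
  -- assemble
  have hcard : ((E.card : ℕ) : ℂ) = (p : ℂ) - 1 := by
    rw [hE, Finset.card_erase_of_mem (mem_univ _), Finset.card_univ, ZMod.card,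
      Nat.cast_sub (by omega : 1 ≤ p)]
    simp
  have hbig : (p : ℂ) ^ 2 * Ipq p q
      = (p : ℂ) ^ 2 * ((p : ℂ) - 1) + 2 * (p : ℂ) * (∑ x ∈ E, D p x)
        + 2 * (p : ℂ) * (∑ x ∈ E, D p (q' * x)) + 4 * (∑ x ∈ E, D p x * D p (q' * x)) := by
    rw [hstep1, Finset.mul_sum, Finset.sum_congr rfl hpoint]
    rw [Finset.sum_add_distrib, Finset.sum_add_distrib, Finset.sum_add_distrib,
      Finset.sum_const, nsmul_eq_mul, hcard, ← Finset.mul_sum, ← Finset.mul_sum, ← Finset.mul_sum]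
    ring
  have h7 : ∑ x ∈ E, D p (q' * x) = -((p : ℂ) * ((p : ℂ) - 1) / 2) := hre.trans hDsum
  apply mul_left_cancel₀ hpC
  rw [show (p : ℂ) * ((p : ℂ) * Ipq p q) = (p : ℂ) ^ 2 * Ipq p q by ring, hbig, hDsum, h7, hDD]
  ring



lemma W6_nat [NeZero p] : W p ((6:ℕ) : ZMod p) = ∑ b ∈ range p, (6 * b) % p * b := by
  rw [← sum_val (fun n : ℕ => (6 * n) % p * n)]
  refine Finset.sum_congr rfl fun x _ => ?_
  congr 1
  have h : ((6:ℕ) : ZMod p) * x = ((6 * x.val : ℕ) : ZMod p) := by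
    push_cast [valcast]; rfl
  rw [h, ZMod.val_natCast]

lemma Wc_nat [NeZero p] [Fact p.Prime] (hp3 : 3 < p) :
    W p (((p - 3) / 2 : ℕ) : ZMod p) = ∑ b ∈ range p, ((p - 3) * b) % p * ((2 * b) % p) := by
  have hp := Fact.out (p := p.Prime)
  have hodd : p % 2 = 1 := by
    rcases hp.eq_two_or_odd with h | h
    · omega
    · exact h
  have h2 : ((2:ℕ) : ZMod p) ≠ 0 := by
    intro h
    have h1 := (ZMod.natCast_eq_zero_iff 2 p).mp h
    have := Nat.le_of_dvd (by norm_num) h1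
    omega
  have hmul : ((2:ℕ) : ZMod p) * (((p - 3) / 2 : ℕ) : ZMod p) = ((p - 3 : ℕ) : ZMod p) := by
    rw [← Nat.cast_mul]
    congr 1
    omega
  unfold W
  rw [← Equiv.sum_comp (Equiv.mulLeft₀ ((2:ℕ) : ZMod p) h2)
    (fun x => ((((p - 3) / 2 : ℕ) : ZMod p) * x).val * x.val)]
  rw [← sum_val (fun n : ℕ => ((p - 3) * n) % p * ((2 * n) % p))]
  refine Finset.sum_congr rfl fun y _ => ?_
  have hcoe : (Equiv.mulLeft₀ ((2:ℕ) : ZMod p) h2) y = ((2:ℕ) : ZMod p) * y := rfl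
  rw [hcoe]
  congr 1
  · have h : (((p - 3) / 2 : ℕ) : ZMod p) * (((2:ℕ) : ZMod p) * y)
        = (((p - 3) * y.val : ℕ) : ZMod p) := by
      rw [← mul_assoc, mul_comm (((p - 3) / 2 : ℕ) : ZMod p) ((2:ℕ) : ZMod p), hmul]
      push_cast [valcast]; rfl
    rw [h, ZMod.val_natCast]
  · have h : ((2:ℕ) : ZMod p) * y = ((2 * y.val : ℕ) : ZMod p) := by
      push_cast [valcast]; rfl
    rw [h, ZMod.val_natCast]


lemma final [NeZero p] [Fact p.Prime] (hp3 : 3 < p) (n : ℤ)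
    (h : 4 * ((W p ((6:ℕ) : ZMod p) : ℤ) + (W p (((p - 3) / 2 : ℕ) : ZMod p) : ℤ))
          = 2 * (p:ℤ) ^ 2 * ((p:ℤ) - 1) + n * (p:ℤ)) :
    Ipq p (-6) + Ipq p (((p : ℤ) + 3) / 2) = (n : ℂ) := by
  have hp := Fact.out (p := p.Prime)
  have hodd : p % 2 = 1 := by
    rcases hp.eq_two_or_odd with h' | h'
    · omega
    · exact h'
  have hoddZ : (p:ℤ) % 2 = 1 := by omega
  set q2 : ℤ := ((p : ℤ) + 3) / 2 with hq2def
  have h2q2 : 2 * q2 = (p:ℤ) + 3 := by omega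
  have h2 : ((2:ℕ) : ZMod p) ≠ 0 := by
    intro h'
    have h1 := (ZMod.natCast_eq_zero_iff 2 p).mp h'
    have := Nat.le_of_dvd (by norm_num) h1
    omega
  have hq1 : (((-6 : ℤ) : ZMod p)) ≠ 0 := by
    intro h'
    have h6 : ((6:ℕ) : ZMod p) = 0 := by
      have e : ((6:ℤ) : ZMod p) = 0 := by push_cast at h' ⊢; linear_combination -h'
      exact_mod_cast e
    have hdvd := (ZMod.natCast_eq_zero_iff 6 p).mp h6
    have h5 : p ≤ 6 := Nat.le_of_dvd (by norm_num) hdvd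
    interval_cases p
    · norm_num at hdvd
    · norm_num at hdvd
    · exact absurd hp (by norm_num)
  have hq2 : ((q2 : ℤ) : ZMod p) ≠ 0 := by
    intro h'
    have h3 : ((3:ℕ) : ZMod p) = 0 := by
      have e : ((2 * q2 : ℤ) : ZMod p) = 0 := by push_cast [h']; ring
      rw [h2q2] at e
      push_cast at e ⊢
      simpa [ZMod.natCast_self] using e
    have hdvd := (ZMod.natCast_eq_zero_iff 3 p).mp h3
    have := Nat.le_of_dvd (by norm_num) hdvd
    omega
  have hc : (((p - 3) / 2 : ℕ) : ZMod p) = -((q2 : ℤ) : ZMod p) := by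
    apply mul_left_cancel₀ h2
    have lhs : ((2:ℕ) : ZMod p) * (((p - 3) / 2 : ℕ) : ZMod p) = ((p - 3 : ℕ) : ZMod p) := by
      rw [← Nat.cast_mul]
      congr 1
      omega
    rw [lhs]
    have e1 : ((p - 3 : ℕ) : ZMod p) = -((3:ℕ) : ZMod p) := by
      have e : ((p - 3 : ℕ) : ZMod p) + ((3:ℕ) : ZMod p) = ((p : ℕ) : ZMod p) := by
        rw [← Nat.cast_add]
        congr 1
        omega
      rw [ZMod.natCast_self] at e
      linear_combination e
    rw [e1]
    have e2 : ((2:ℕ) : ZMod p) * -((q2 : ℤ) : ZMod p) = -(((2 * q2 : ℤ)) : ZMod p) := by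
      push_cast
      ring
    rw [e2, h2q2]
    push_cast [ZMod.natCast_self]
    ring
  have hm1 := main hp3 (-6) hq1
  have hm2 := main hp3 q2 hq2
  have e6 : -(((-6 : ℤ)) : ZMod p) = ((6:ℕ) : ZMod p) := by push_cast; ring
  rw [e6] at hm1
  rw [← hc] at hm2
  have hpC : (p:ℂ) ≠ 0 := Nat.cast_ne_zero.mpr (by omega)
  apply mul_left_cancel₀ hpC
  rw [mul_add, hm1, hm2]
  have hZ := congrArg (fun z : ℤ => (z : ℂ)) h
  push_cast at hZ
  linear_combination hZ

end Stmt16Aux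

theorem stmt_16 (p : ℕ) (hp : p.Prime) (hp3 : 3 < p) :
    (∀ r : ℕ, p = 6 * r + 1 →
      Ipq p (-6) + Ipq p (((p : ℤ) + 3) / 2) = -(8 * (r : ℂ))) ∧
    (∀ r : ℕ, p = 6 * r + 5 →
      Ipq p (-6) + Ipq p (((p : ℤ) + 3) / 2) = 8 * (r : ℂ) + 8) := by
  haveI : Fact p.Prime := ⟨hp⟩
  haveI : NeZero p := ⟨by omega⟩
  constructor
  · intro r hr
    obtain ⟨s, rfl⟩ : ∃ s, r = s + 1 := ⟨r - 1, by omega⟩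
    have key : Ipq p (-6) + Ipq p (((p : ℤ) + 3) / 2) = ((-(8 * ((s:ℤ) + 1)) : ℤ) : ℂ) := by
      apply Stmt16Aux.final hp3
      have hp7 : p = 6 * s + 7 := by omega
      subst hp7
      rw [Stmt16Aux.W6_nat, Stmt16Aux.Wc_nat hp3,
        show 6 * s + 7 - 3 = 6 * s + 4 from by omega]
      push_cast
      linear_combination Stmt16Arith.arith1 s
    rw [key]
    push_cast
    ring
  · intro r hr
    have key : Ipq p (-6) + Ipq p (((p : ℤ) + 3) / 2) = (((8 * (r:ℤ) + 8) : ℤ) : ℂ) := by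
      apply Stmt16Aux.final hp3
      have hp5 : p = 6 * r + 5 := hr
      subst hp5
      rw [Stmt16Aux.W6_nat, Stmt16Aux.Wc_nat hp3,
        show 6 * r + 5 - 3 = 6 * r + 2 from by omega]
      push_cast
      linear_combination Stmt16Arith.arith2 r
    rw [key]
    push_cast
    ring
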